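/- Let T be a rooted tree and ≈ an equivalence relation on its nodes whose classes are connected subtrees. If every infinite branch of T is eventually contained in a single ≈-class (i.e., has a tail all of whose nodes are pairwise ≈-equivalent), then the quotient tree T/≈ is well-founded (has no infinite branch). -/

import Mathlib

section Aux
variable {V : Type*}

/-- Auxiliary: get the segment lists. -/
theorem aux_seg (G : SimpleGraph V) (s : Setoid V) [Inhabited V]
    (hconn : ∀ v : V, (G.induce {w | s.r v w}).Connected)
    (u v : V) (huv : s.r u v) :
    ∃ L : List V, L ≠ [] ∧ L.Nodup ∧ List.Chain' G.Adj L ∧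
      L.headI = u ∧ L.getLast? = some v ∧ ∀ w ∈ L, s.r u w := by
  haveI := Classical.decEq V
  haveI : DecidableEq {w | s.r u w} := Classical.decEq _
  obtain ⟨p⟩ := (hconn u).preconnected ⟨u, s.refl _⟩ ⟨v, huv⟩
  obtain ⟨q, hq⟩ := p.toPath
  refine ⟨q.support.map Subtype.val, ?_, ?_, ?_, ?_, ?_, ?_⟩
  · exact fun h => q.support_ne_nil (List.map_eq_nil_iff.mp h)
  · exact hq.support_nodup.map Subtype.val_injective
  · exact List.isChain_map_of_isChain _ (fun a b h => by simpa using h) q.isChain_adj_support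
  · rw [q.support_eq_cons]; rfl
  · rw [List.getLast?_eq_getLast_of_ne_nil (fun h => q.support_ne_nil (List.map_eq_nil_iff.mp h))]
    congr 1
    rw [List.getLast_map, q.getLast_support]
  · intro w hw
    obtain ⟨⟨w', hw'⟩, _, rfl⟩ := List.mem_map.mp hw
    exact hw'

theorem aux_main [Inhabited V] (G : SimpleGraph V) (s : Setoid V)
    (c : ℕ → Quotient s) (hcinj : Function.Injective c)
    (l : ℕ → List V)
    (hne : ∀ k, l k ≠ [])
    (hnd : ∀ k, (l k).Nodup)
    (hch : ∀ k, List.Chain' G.Adj (l k))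
    (hcls : ∀ k, ∀ v ∈ l k, Quotient.mk s v = c k)
    (hcross : ∀ k, ∀ a, (l k).getLast? = some a → G.Adj a ((l (k+1)).headI))
    (htail : ∀ b : ℕ → V, Function.Injective b → (∀ i, G.Adj (b i) (b (i + 1))) →
      ∃ N, ∀ i ≥ N, ∀ j ≥ N, s.r (b i) (b j)) : False := by
  classical
  set step : ℕ × List V → ℕ × List V :=
    fun p => if p.2.tail = [] then (p.1 + 1, l (p.1 + 1)) else (p.1, p.2.tail) with hstep
  set st : ℕ → ℕ × List V := fun n => step^[n] (0, l 0) with hst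
  have hstsucc : ∀ n, st (n+1) = step (st n) := by
    intro n; simp [hst, Function.iterate_succ_apply']
  have hA : ∀ n, (st n).2.tail = [] → st (n+1) = ((st n).1 + 1, l ((st n).1 + 1)) := by
    intro n h; rw [hstsucc n, hstep]; simp only [if_pos h]
  have hB : ∀ n, (st n).2.tail ≠ [] → st (n+1) = ((st n).1, (st n).2.tail) := by
    intro n h; rw [hstsucc n, hstep]; simp only [if_neg h]
  -- invariant
  have hinv : ∀ n, (st n).2 ≠ [] ∧ (st n).2 <:+ l (st n).1 := by
    intro n
    induction n with
    | zero => exact ⟨hne 0, List.suffix_refl _⟩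
    | succ n ih =>
      rcases ih with ⟨h1, h2⟩
      by_cases h : (st n).2.tail = []
      · rw [hA n h]; exact ⟨hne _, List.suffix_refl _⟩
      · rw [hB n h]; exact ⟨h, (List.tail_suffix _).trans h2⟩
  set b : ℕ → V := fun n => (st n).2.headI with hb
  set seg : ℕ → ℕ := fun n => (st n).1 with hseg
  -- b n is in list l (seg n)
  have hmem : ∀ n, b n ∈ l (seg n) := by
    intro n
    obtain ⟨h1, h2⟩ := hinv n
    obtain ⟨a, t, hat⟩ := List.exists_cons_of_ne_nil h1
    have hba : b n = a := by rw [hb]; simp only [hat, List.headI]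
    rw [hba]
    exact h2.subset (by rw [hat]; exact List.mem_cons_self)
  have hbcls : ∀ n, Quotient.mk s (b n) = c (seg n) := fun n => hcls _ _ (hmem n)
  -- last element extraction
  have hlastq : ∀ n, (st n).2.getLast? = (l (seg n)).getLast? := by
    intro n
    obtain ⟨h1, h2⟩ := hinv n
    obtain ⟨t, ht⟩ := h2
    rw [← ht, List.getLast?_append_of_ne_nil _ h1]
  have hlast : ∀ n, (st n).2.tail = [] → (l (seg n)).getLast? = some (b n) := by
    intro n h
    obtain ⟨h1, h2⟩ := hinv n
    obtain ⟨a, t, hat⟩ := List.exists_cons_of_ne_nil h1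
    have ht : t = [] := by rw [hat] at h; exact h
    subst ht
    have hba : b n = a := by rw [hb]; simp only [hat, List.headI]
    rw [hba, ← hlastq n, hat]
    simp
  -- adjacency
  have hbadj : ∀ n, G.Adj (b n) (b (n+1)) := by
    intro n
    by_cases h : (st n).2.tail = []
    · have h1 := hlast n h
      have h2 := hA n h
      have hb1 : b (n+1) = (l ((st n).1 + 1)).headI := by show (st (n+1)).2.headI = _; rw [h2]
      rw [hb1]
      exact hcross (seg n) (b n) h1
    · obtain ⟨h1, h2⟩ := hinv n
      obtain ⟨a, t, hat⟩ := List.exists_cons_of_ne_nil h1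
      have ht : t ≠ [] := by rw [hat] at h; exact h
      obtain ⟨a', t', hat'⟩ := List.exists_cons_of_ne_nil ht
      have hchain : List.Chain' G.Adj (st n).2 := (hch _).suffix h2
      rw [hat, hat', List.Chain', List.isChain_cons_cons] at hchain
      have hbn : b n = a := by rw [hb]; simp only [hat, List.headI]
      have hbn1 : b (n+1) = a' := by
        show (st (n+1)).2.headI = a'
        rw [hB n h]
        simp only [hat, hat', List.tail_cons, List.headI]
      rw [hbn, hbn1]
      exact hchain.1
  -- seg takes unit steps
  have hsegstep : ∀ n, seg (n+1) = seg n ∨ seg (n+1) = seg n + 1 := by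
    intro n
    by_cases h : (st n).2.tail = []
    · right; show (st (n+1)).1 = (st n).1 + 1; rw [hA n h]
    · left; show (st (n+1)).1 = (st n).1; rw [hB n h]
  have hsegmono : Monotone seg := by
    apply monotone_nat_of_le_succ
    intro n
    rcases hsegstep n with h | h <;> omega
  -- constant-seg stretches are tail steps
  have hdrop : ∀ m d, seg (m + d) = seg m → (st (m + d)).2 = (st m).2.drop d := by
    intro m d
    induction d with
    | zero => intro _; simp
    | succ d ih =>
      intro hsame
      have h1 : seg m ≤ seg (m + d) := hsegmono (by omega)
      have h2 : seg (m + d) ≤ seg (m + d + 1) := hsegmono (by omega)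
      have h3 : seg (m + d) = seg m := by
        rw [show m + (d+1) = m + d + 1 by omega] at hsame; omega
      by_cases h : (st (m + d)).2.tail = []
      · exfalso
        have hA2 := hA (m + d) h
        have : seg (m + d + 1) = seg (m + d) + 1 := by
          show (st (m + d + 1)).1 = (st (m + d)).1 + 1; rw [hA2]
        rw [show m + (d+1) = m + d + 1 by omega] at hsame
        omega
      · have := hB (m + d) h
        rw [show m + (d+1) = m + d + 1 by omega, this]
        simp only at *
        rw [ih h3, List.tail_drop]
  -- injectivity of b
  have hbne : ∀ m n, m < n → b m ≠ b n := by
    intro m n hmn heq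
    have hcc : c (seg m) = c (seg n) := by rw [← hbcls m, ← hbcls n, heq]
    have hss : seg m = seg n := hcinj hcc
    obtain ⟨d, rfl⟩ : ∃ d, n = m + d := ⟨n - m, by omega⟩
    have hd : 0 < d := by omega
    have hdr := hdrop m d hss.symm
    obtain ⟨h1, h2⟩ := hinv m
    obtain ⟨a, t, hat⟩ := List.exists_cons_of_ne_nil h1
    obtain ⟨e, rfl⟩ : ∃ e, d = e + 1 := ⟨d - 1, by omega⟩
    have hbm : b m = a := by rw [hb]; simp only [hat, List.headI]
    have hdr2 : (st (m + (e+1))).2 = t.drop e := by rw [hdr, hat, List.drop_succ_cons]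
    have hne2 : t.drop e ≠ [] := by rw [← hdr2]; exact (hinv _).1
    obtain ⟨a', t', hat'⟩ := List.exists_cons_of_ne_nil hne2
    have hbn : b (m + (e+1)) = a' := by rw [hb]; simp only [hdr2, hat', List.headI]
    have hmemt : a' ∈ t := List.drop_subset e t (by rw [hat']; exact List.mem_cons_self)
    have hnodup : ((st m).2).Nodup := (h2.sublist).nodup (hnd _)
    rw [hat, List.nodup_cons] at hnodup
    exact hnodup.1 (by rw [← hbm, heq, hbn]; exact hmemt)
  have hbinj : Function.Injective b := by
    intro m n h
    rcases lt_trichotomy m n with hlt | heq | hgt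
    · exact absurd h (hbne m n hlt)
    · exact heq
    · exact absurd h.symm (hbne n m hgt)
  -- seg grows without bound
  have hgrow : ∀ n, ∃ m, n < m ∧ seg m = seg n + 1 := by
    have H : ∀ L : ℕ, ∀ n, (st n).2.length ≤ L → ∃ m, n < m ∧ seg m = seg n + 1 := by
      intro L
      induction L with
      | zero =>
        intro n hn
        exact absurd (List.length_eq_zero_iff.mp (Nat.le_zero.mp hn)) (hinv n).1
      | succ L ih =>
        intro n hn
        by_cases h : (st n).2.tail = []
        · refine ⟨n+1, Nat.lt_succ_self n, ?_⟩
          show (st (n+1)).1 = (st n).1 + 1; rw [hA n h]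
        · have hstep2 := hB n h
          have hlen : (st (n+1)).2.length ≤ L := by
            rw [hstep2]
            simp only [List.length_tail]
            have : 0 < (st n).2.length := List.length_pos_iff.mpr (hinv n).1
            omega
          obtain ⟨m, hm1, hm2⟩ := ih (n+1) hlen
          refine ⟨m, by omega, ?_⟩
          have : seg (n+1) = seg n := by show (st (n+1)).1 = (st n).1; rw [hstep2]
          rw [hm2, this]
    exact fun n => H ((st n).2.length) n le_rfl
  -- conclude
  obtain ⟨N, hN⟩ := htail b hbinj hbadj
  obtain ⟨m, hm1, hm2⟩ := hgrow N
  have h1 : Quotient.mk s (b N) = Quotient.mk s (b m) := Quotient.sound (hN N le_rfl m hm1.le)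
  have h2 : c (seg N) = c (seg m) := by rw [← hbcls N, ← hbcls m, h1]
  have := hcinj h2
  omega




end Aux

/-- If every infinite branch of a tree is eventually contained in a single class of an
equivalence relation with connected classes, then the quotient tree has no infinite
branch (it is well-founded). -/
theorem quotient_tree_well_founded {V : Type*} (G : SimpleGraph V) (hG : G.IsTree)
    (s : Setoid V)
    (hconn : ∀ v : V, (G.induce {w | s.r v w}).Connected)
    (htail : ∀ b : ℕ → V, Function.Injective b → (∀ i, G.Adj (b i) (b (i + 1))) →
      ∃ N, ∀ i ≥ N, ∀ j ≥ N, s.r (b i) (b j)) :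
    ¬ ∃ c : ℕ → Quotient s, Function.Injective c ∧
      ∀ i, (SimpleGraph.fromRel (fun c₁ c₂ : Quotient s =>
        ∃ a b : V, Quotient.mk s a = c₁ ∧ Quotient.mk s b = c₂ ∧ G.Adj a b)).Adj
        (c i) (c (i + 1)) := by
  rintro ⟨c, hcinj, hcadj⟩
  obtain ⟨v0, -⟩ := Quotient.exists_rep (c 0)
  haveI : Inhabited V := ⟨v0⟩
  -- extract the cross edges
  have hxy : ∀ i, ∃ x y : V, Quotient.mk s x = c i ∧ Quotient.mk s y = c (i+1) ∧ G.Adj x y := by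
    intro i
    obtain ⟨-, h | h⟩ := hcadj i
    · obtain ⟨a, b, ha, hb, hab⟩ := h; exact ⟨a, b, ha, hb, hab⟩
    · obtain ⟨a, b, ha, hb, hab⟩ := h; exact ⟨b, a, hb, ha, hab.symm⟩
  choose x y hx hy hxyadj using hxy
  have hrel : ∀ k, s.r (y k) (x (k+1)) := by
    intro k
    exact Quotient.exact ((hy k).trans (hx (k+1)).symm)
  -- the within-class segments
  have hseg := fun k => aux_seg G s hconn (y k) (x (k+1)) (hrel k)
  choose L hL1 hL2 hL3 hL4 hL5 hL6 using hseg
  -- assemble the full list family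
  set l : ℕ → List V := fun k => Nat.casesOn k [x 0] L with hl
  have hl0 : l 0 = [x 0] := rfl
  have hne : ∀ k, l k ≠ [] := by
    intro k; cases k with
    | zero => exact List.cons_ne_nil _ _
    | succ k => exact hL1 k
  have hnd : ∀ k, (l k).Nodup := by
    intro k; cases k with
    | zero => exact List.nodup_singleton _
    | succ k => exact hL2 k
  have hch : ∀ k, List.Chain' G.Adj (l k) := by
    intro k; cases k with
    | zero => exact List.isChain_singleton _
    | succ k => exact hL3 k
  have hcls : ∀ k, ∀ v ∈ l k, Quotient.mk s v = c k := by
    intro k v hv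
    cases k with
    | zero =>
      have : v = x 0 := by rw [hl0] at hv; simpa using hv
      rw [this]; exact hx 0
    | succ k =>
      have h1 : s.r (y k) v := hL6 k v hv
      have h2 : Quotient.mk s (y k) = Quotient.mk s v := Quotient.sound h1
      rw [← h2]; exact hy k
  have hcross : ∀ k, ∀ a, (l k).getLast? = some a → G.Adj a ((l (k+1)).headI) := by
    intro k a ha
    have hhead : (l (k+1)).headI = y k := hL4 k
    rw [hhead]
    cases k with
    | zero =>
      have : a = x 0 := by rw [hl0] at ha; simpa using ha.symm
      rw [this]; exact hxyadj 0
    | succ k =>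
      have : some (x (k+1)) = some a := by rw [← ha, hL5 k]
      have : a = x (k+1) := (Option.some.inj this).symm
      rw [this]; exact hxyadj (k+1)
  exact aux_main G s c hcinj l hne hnd hch hcls hcross htail
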